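/- Let R be a discrete valuation ring with uniformizer ξ, and let A be a commutative R-algebra on which multiplication by ξ is injective. Let σ ∈ A be an element whose image in the quotient ring A/ξA is a nonzerodivisor. Then the quotient ring A/(σ) is flat as an R-module. -/

import Mathlib

open TensorProduct LinearMap in
theorem my_flat_of_smul_injective (R : Type*) [CommRing R] [IsDomain R] [IsPrincipalIdealRing R]
    (M : Type*) [AddCommGroup M] [Module R M]
    (h : ∀ r : R, r ≠ 0 → Function.Injective fun m : M => r • m) :
    Module.Flat R M := by
  rw [Module.Flat.iff_rTensor_injective']
  intro I
  obtain ⟨r, rfl⟩ := (IsPrincipalIdealRing.principal I).principal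
  by_cases hr : r = 0
  · subst hr
    rw [show Submodule.span R ({(0:R)} : Set R) = ⊥ from by simp]
    exact fun x y _ => Subsingleton.elim x y
  · set e : R ≃ₗ[R] (Ideal.span {r} : Ideal R) :=
      LinearEquiv.toSpanNonzeroSingleton R R r hr with he
    have hsurj : Function.Surjective (rTensor M e.toLinearMap) :=
      (TensorProduct.congr e (LinearEquiv.refl R M)).surjective
    have hcomp : (Ideal.span {r} : Ideal R).subtype ∘ₗ e.toLinearMap = r • LinearMap.id := by
      ext
      show ((LinearEquiv.toSpanNonzeroSingleton R R r hr) 1 : R) = r • 1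
      rw [LinearEquiv.toSpanNonzeroSingleton_one]
      simp
    have hinj : Function.Injective
        (rTensor M ((Ideal.span {r} : Ideal R).subtype ∘ₗ e.toLinearMap)) := by
      rw [hcomp]
      intro x y hxy
      have hx : rTensor M (r • (LinearMap.id : R →ₗ[R] R)) = r • LinearMap.id := by
        ext m
        simp [smul_tmul']
      rw [hx] at hxy
      have h1 := congrArg (TensorProduct.lid R M) hxy
      simp only [LinearMap.smul_apply, LinearMap.id_apply, map_smul] at h1
      exact (TensorProduct.lid R M).injective (h r hr h1)
    rw [LinearMap.rTensor_comp, LinearMap.coe_comp] at hinj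
    exact hinj.of_comp_right hsurj

/-- Let `R` be a DVR with uniformizer `ξ`, and `A` a commutative `R`-algebra on which
multiplication by `ξ` is injective. If `σ ∈ A` has nonzerodivisor image in `A/ξA`,
then `A/(σ)` is flat over `R`. -/
theorem flat_of_fiberwise_regular_section
    (R : Type*) [CommRing R] [IsDomain R] [IsDiscreteValuationRing R] (ξ : R)
    (hunif : Ideal.span ({ξ} : Set R) = IsLocalRing.maximalIdeal R)
    (A : Type*) [CommRing A] [Algebra R A]
    (hξ : Function.Injective fun a : A => algebraMap R A ξ * a)
    (σ : A)
    (hσ : (Ideal.Quotient.mk (Ideal.span {algebraMap R A ξ}) σ) ∈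
      nonZeroDivisors (A ⧸ Ideal.span {algebraMap R A ξ})) :
    Module.Flat R (A ⧸ Ideal.span ({σ} : Set A)) := by
  set ξA := algebraMap R A ξ with hξA
  -- key: σ | ξA * a → σ | a
  have key : ∀ a : A, ξA * a ∈ Ideal.span ({σ} : Set A) → a ∈ Ideal.span ({σ} : Set A) := by
    intro a ha
    rw [Ideal.mem_span_singleton] at ha ⊢
    obtain ⟨b, hb⟩ := ha
    have hb0 : (Ideal.Quotient.mk (Ideal.span {ξA}) b) *
        (Ideal.Quotient.mk (Ideal.span {ξA}) σ) = 0 := by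
      have : (Ideal.Quotient.mk (Ideal.span {ξA})) (ξA * a) = 0 := by
        rw [Ideal.Quotient.eq_zero_iff_mem]
        exact Ideal.mul_mem_right a _ (Ideal.subset_span rfl)
      rw [hb] at this
      rw [mul_comm]
      simpa using this
    have hbmem : b ∈ Ideal.span ({ξA} : Set A) :=
      Ideal.Quotient.eq_zero_iff_mem.mp (hσ.2 _ hb0)
    rw [Ideal.mem_span_singleton] at hbmem
    obtain ⟨c, hc⟩ := hbmem
    refine ⟨c, ?_⟩
    apply hξ
    show ξA * a = ξA * (σ * c)
    rw [hb, hc]; ring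
  -- mult by ξ is injective on the quotient
  set Q := A ⧸ Ideal.span ({σ} : Set A) with hQ
  set π := Ideal.Quotient.mk (Ideal.span ({σ} : Set A)) with hπ
  have hξQ : Function.Injective fun q : Q => π ξA * q := by
    intro x y hxy
    obtain ⟨xa, rfl⟩ := Ideal.Quotient.mk_surjective x
    obtain ⟨ya, rfl⟩ := Ideal.Quotient.mk_surjective y
    have : π (ξA * xa) = π (ξA * ya) := by simpa using hxy
    rw [Ideal.Quotient.eq] at this ⊢
    have : ξA * (xa - ya) ∈ Ideal.span ({σ} : Set A) := by
      rw [mul_sub]; exact this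
    exact key _ this
  -- hence mult by any nonzero r is injective on Q
  have hξ0 : ξ ≠ 0 := by
    intro h0
    apply IsDiscreteValuationRing.not_a_field R
    rw [← hunif, h0, Ideal.span_singleton_eq_bot]
  have hirr : Irreducible ξ :=
    IsDiscreteValuationRing.irreducible_of_span_eq_maximalIdeal ξ hξ0 hunif.symm
  have hpow : ∀ n : ℕ, ∀ x y : Q, (π ξA) ^ n * x = (π ξA) ^ n * y → x = y := by
    intro n
    induction n with
    | zero => intro x y h; simpa using h
    | succ n ih =>
      intro x y h
      apply ih
      apply hξQ
      have hz : ∀ z : Q, π ξA * ((π ξA) ^ n * z) = (π ξA) ^ (n + 1) * z := fun z => by ring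
      show π ξA * ((π ξA) ^ n * x) = π ξA * ((π ξA) ^ n * y)
      rw [hz, hz]
      exact h
  apply my_flat_of_smul_injective
  intro r hr
  obtain ⟨n, u, rfl⟩ := IsDiscreteValuationRing.eq_unit_mul_pow_irreducible hr hirr
  intro x y hxy
  simp only [Algebra.smul_def] at hxy
  have hmap : algebraMap R Q (↑u * ξ ^ n) = algebraMap R Q ↑u * (π ξA) ^ n := by
    rw [map_mul, map_pow]; rfl
  rw [hmap] at hxy
  have hu : IsUnit (algebraMap R Q (u : R)) := u.isUnit.map (algebraMap R Q)
  rcases hu with ⟨v, hv⟩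
  have h2 := congrArg (fun z : Q => (↑v⁻¹ : Q) * z) hxy
  simp only [← hv, ← mul_assoc, Units.inv_mul, one_mul] at h2
  exact hpow n x y h2
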